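/- arXiv:2311.01784 — 4 statements merged into one kernel-verified Lean document; each statement's English description precedes it below -/
import Mathlib

section
/- Let n ≥ 2 and let F be a carriage-wise polynomial function on n-quivers, given by polynomials P_ε, that is invariant under all cluster mutations μ_1,…,μ_n. Suppose two sign patterns ε₁ and ε₂ coincide except at a single pair (i,j), and there exists a vertex k ∉ {i,j} such that the (common) pattern assigns the same sign to the entries x_{ik} and x_{kj}. Then P_{ε₁} and P_{ε₂} coincide as polynomials. -/
open Matrix

/-- An `n`-quiver: an `n × n` real skew-symmetric matrix. -/
def IsQuiver {n : ℕ} (X : Matrix (Fin n) (Fin n) ℝ) : Prop :=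
  Xᵀ = -X

/-- Cluster mutation at vertex `k`. -/
noncomputable def mutate {n : ℕ} (k : Fin n) (X : Matrix (Fin n) (Fin n) ℝ) :
    Matrix (Fin n) (Fin n) ℝ :=
  fun i j =>
    if i = k ∨ j = k then -X i j
    else if 0 < X i k ∧ 0 < X k j then X i j + X i k * X k j
    else if X i k < 0 ∧ X k j < 0 then X i j - X i k * X k j
    else X i j

/-- The sign `+1` or `-1` encoded by a Boolean. -/
def signOf (b : Bool) : ℝ := if b then 1 else -1

/-- Membership in the carriage determined by a sign pattern `ε` on pairs `i < j`. -/
def InCarriage {n : ℕ} (ε : Fin n → Fin n → Bool) (X : Matrix (Fin n) (Fin n) ℝ) : Prop :=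
  ∀ i j : Fin n, i < j → 0 ≤ signOf (ε i j) * X i j

/-- Index type for the entries `x_{ij}`, `i < j`, of a skew-symmetric matrix. -/
abbrev QIdx (n : ℕ) := {p : Fin n × Fin n // p.1 < p.2}

/-- The upper-triangular entries of a matrix, as a point to evaluate polynomials at. -/
def entries {n : ℕ} (X : Matrix (Fin n) (Fin n) ℝ) : QIdx n → ℝ :=
  fun p => X p.1.1 p.1.2

/-- The sign a pattern `ε` prescribes to the entry `x_{ij}` of a skew-symmetric matrix,
extended to all pairs `i ≠ j` by the convention `x_{ji} = -x_{ij}`. -/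
def extSign {n : ℕ} (ε : Fin n → Fin n → Bool) (i j : Fin n) : ℝ :=
  if i < j then signOf (ε i j) else -signOf (ε j i)

namespace Stmt1Aux

open MvPolynomial Set

lemma signOf_cases (b : Bool) : signOf b = 1 ∨ signOf b = -1 := by
  cases b <;> simp [signOf]

lemma signOf_mul_self (b : Bool) : signOf b * signOf b = 1 := by
  cases b <;> norm_num [signOf]

lemma signOf_not (b : Bool) : signOf (!b) = -signOf b := by
  cases b <;> norm_num [signOf]

lemma extSign_cases {n : ℕ} (ε : Fin n → Fin n → Bool) (a b : Fin n) :
    extSign ε a b = 1 ∨ extSign ε a b = -1 := by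
  unfold extSign
  split
  · exact signOf_cases _
  · rcases signOf_cases (ε b a) with h | h <;> rw [h] <;> simp

lemma signOf_decide_pos {x : ℝ} (hx : x = 1 ∨ x = -1) :
    signOf (decide ((0:ℝ) < x)) = x := by
  rcases hx with rfl | rfl <;> norm_num [signOf]

variable {n : ℕ}

/-- matrix built from upper-triangular entries (skew-symmetric). -/
def mk (y : QIdx n → ℝ) : Matrix (Fin n) (Fin n) ℝ := fun a b =>
  if h : a < b then y ⟨(a, b), h⟩ else if h' : b < a then -y ⟨(b, a), h'⟩ else 0

lemma mk_lt (y : QIdx n → ℝ) {a b : Fin n} (h : a < b) : mk y a b = y ⟨(a, b), h⟩ := by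
  simp [mk, h]

lemma mk_gt (y : QIdx n → ℝ) {a b : Fin n} (h : b < a) : mk y a b = -y ⟨(b, a), h⟩ := by
  simp [mk, asymm h, h]

lemma entries_mk (y : QIdx n → ℝ) : entries (mk y) = y := by
  funext p
  show mk y p.1.1 p.1.2 = y p
  rw [mk_lt y p.2]

lemma isQuiver_mk (y : QIdx n → ℝ) : IsQuiver (mk y) := by
  unfold IsQuiver
  ext a b
  show mk y b a = -(mk y a b)
  rcases lt_trichotomy a b with h | h | h
  · rw [mk_lt y h, mk_gt y h]
  · subst h; simp [mk]
  · rw [mk_gt y h, mk_lt y h]; ring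

end Stmt1Aux
lemma flip_if (u v w : ℝ) :
    (if 0 < -v ∧ 0 < -u then -w + -v * -u
     else if -v < 0 ∧ -u < 0 then -w - -v * -u else -w)
    = -(if 0 < u ∧ 0 < v then w + u * v else if u < 0 ∧ v < 0 then w - u * v else w) := by
  split_ifs <;>
    first
      | ring1
      | ((try simp only [not_and_or, not_lt] at *); casesm* _ ∧ _, _ ∨ _ <;> linarith)

namespace Stmt1Aux
open MvPolynomial Set

variable {n : ℕ}

lemma isQuiver_mutate (k : Fin n) {X : Matrix (Fin n) (Fin n) ℝ} (h : IsQuiver X) :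
    IsQuiver (mutate k X) := by
  have hs : ∀ a b, X b a = -X a b := fun a b => congrFun (congrFun h a) b
  unfold IsQuiver
  ext a b
  show mutate k X b a = -(mutate k X a b)
  unfold mutate
  by_cases hc : a = k ∨ b = k
  · rw [if_pos (Or.symm hc), if_pos hc, hs a b]
  · have h1 : ¬(b = k ∨ a = k) := fun h => hc (Or.symm h)
    rw [if_neg h1, if_neg hc, hs a b, hs k b, hs a k]
    exact flip_if (X a k) (X k b) (X a b)

/-- entry `x_{ab}` as a polynomial in the upper entries. -/
noncomputable def ent (a b : Fin n) : MvPolynomial (QIdx n) ℝ :=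
  if h : a < b then X ⟨(a, b), h⟩ else if h' : b < a then -X ⟨(b, a), h'⟩ else 0

lemma eval_ent (y : QIdx n → ℝ) (a b : Fin n) : eval y (ent a b) = mk y a b := by
  unfold ent mk
  split_ifs <;> simp

/-- the polynomial map realizing mutation at `k` on the relevant region. -/
noncomputable def M (ε : Fin n → Fin n → Bool) (k : Fin n) (p : QIdx n) :
    MvPolynomial (QIdx n) ℝ :=
  if p.1.1 = k ∨ p.1.2 = k then -X p
  else if extSign ε p.1.1 k = extSign ε k p.1.2 then
    X p + C (extSign ε p.1.1 k) * (ent p.1.1 k * ent k p.1.2)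
  else X p

/-- the target sign pattern after mutation. -/
noncomputable def eps3 (ε : Fin n → Fin n → Bool) (k : Fin n) : Fin n → Fin n → Bool :=
  fun a b =>
    if a = k ∨ b = k then !(ε a b)
    else if extSign ε a k = extSign ε k b then decide ((0:ℝ) < extSign ε a k)
    else ε a b

/-- the interval prescribed to `signOf (ε a b) * x_{ab}`. -/
def J (k : Fin n) (p : QIdx n) : Set ℝ :=
  if p.1.1 = k ∨ p.1.2 = k then Ioo (1/2 : ℝ) 1 else Ioo 0 (1/4)

/-- the open region used for the identity-of-polynomials argument. -/
def U (ε : Fin n → Fin n → Bool) (k : Fin n) : Set (QIdx n → ℝ) :=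
  {y | ∀ p : QIdx n, signOf (ε p.1.1 p.1.2) * y p ∈ J k p}

lemma J_pos {k : Fin n} {p : QIdx n} {x : ℝ} (h : x ∈ J k p) : 0 < x := by
  unfold J at h
  split_ifs at h with h' <;> exact lt_of_le_of_lt (by norm_num) h.1

lemma isOpen_U (ε : Fin n → Fin n → Bool) (k : Fin n) : IsOpen (U ε k) := by
  have : U ε k =
      ⋂ p : QIdx n, (fun y : QIdx n → ℝ => signOf (ε p.1.1 p.1.2) * y p) ⁻¹' (J k p) := by
    ext y
    simp only [U, Set.mem_iInter, Set.mem_setOf_eq, Set.mem_preimage]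
  rw [this]
  refine isOpen_iInter_of_finite fun p => ?_
  refine (continuous_const.mul (continuous_apply p)).isOpen_preimage _ ?_
  unfold J; split_ifs <;> exact isOpen_Ioo

lemma nonempty_U (ε : Fin n → Fin n → Bool) (k : Fin n) : (U ε k).Nonempty := by
  refine ⟨fun p => signOf (ε p.1.1 p.1.2) *
    (if p.1.1 = k ∨ p.1.2 = k then (3/4 : ℝ) else 1/8), fun p => ?_⟩
  rw [← mul_assoc, signOf_mul_self, one_mul]
  unfold J
  split_ifs <;> norm_num

lemma eval_bind₁' (y : QIdx n → ℝ) (g : QIdx n → MvPolynomial (QIdx n) ℝ)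
    (φ : MvPolynomial (QIdx n) ℝ) :
    eval y (bind₁ g φ) = eval (fun p => eval y (g p)) φ := by
  have key : ∀ (f : QIdx n → ℝ) (q : MvPolynomial (QIdx n) ℝ), aeval f q = eval f q := by
    intro f q
    rw [MvPolynomial.aeval_def, Algebra.algebraMap_self]
    rfl
  have h := aeval_bind₁ (R := ℝ) (S := ℝ) y g φ
  simp only [key] at h
  exact h

lemma eq_zero_of_eqOn_open {σ : Type*} [Fintype σ] {p : MvPolynomial σ ℝ}
    {V : Set (σ → ℝ)} (hV : IsOpen V) (hne : V.Nonempty)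
    (h : ∀ x ∈ V, eval x p = 0) : p = 0 := by
  obtain ⟨x₀, hx₀⟩ := hne
  have han : AnalyticOnNhd ℝ (fun x : σ → ℝ => eval x p) Set.univ :=
    AnalyticOnNhd.eval_mvPolynomial p
  have hpre : IsPreconnected (Set.univ : Set (σ → ℝ)) :=
    (convex_univ (𝕜 := ℝ) (E := σ → ℝ)).isPreconnected
  have heq : Set.EqOn (fun x : σ → ℝ => eval x p) 0 Set.univ := by
    refine han.eqOn_zero_of_preconnected_of_eventuallyEq_zero hpre (Set.mem_univ x₀) ?_
    filter_upwards [hV.mem_nhds hx₀] with x hx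
    exact h x hx
  refine MvPolynomial.funext fun x => ?_
  simpa using heq (Set.mem_univ x)

end Stmt1Aux

namespace Stmt1Aux
open MvPolynomial Set

lemma key_claim {n : ℕ}
    (F : Matrix (Fin n) (Fin n) ℝ → ℝ)
    (P : (Fin n → Fin n → Bool) → MvPolynomial (QIdx n) ℝ)
    (hP : ∀ (ε : Fin n → Fin n → Bool) (X : Matrix (Fin n) (Fin n) ℝ),
      IsQuiver X → InCarriage ε X → F X = MvPolynomial.eval (entries X) (P ε))
    (hinv : ∀ (k : Fin n) (X : Matrix (Fin n) (Fin n) ℝ),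
      IsQuiver X → F (mutate k X) = F X)
    (ε₁ : Fin n → Fin n → Bool) (k : Fin n)
    (ε : Fin n → Fin n → Bool)
    (hA : ∀ a b : Fin n, a < b → (a = k ∨ b = k) → ε a b = ε₁ a b)
    (hB : ∀ a b : Fin n, a < b → ¬(a = k ∨ b = k) →
        extSign ε₁ a k ≠ extSign ε₁ k b → ε a b = ε₁ a b) :
    P ε = bind₁ (M ε₁ k) (P (eps3 ε₁ k)) := by
  rw [← sub_eq_zero]
  apply eq_zero_of_eqOn_open (isOpen_U ε k) (nonempty_U ε k)
  intro y hy
  rw [map_sub, sub_eq_zero]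
  have hy' : ∀ p : QIdx n, signOf (ε p.1.1 p.1.2) * y p ∈ J k p := hy
  have hq : IsQuiver (mk y) := isQuiver_mk y
  -- carriage membership of (mk y)
  have hcar : InCarriage ε (mk y) := by
    intro a b hab
    rw [mk_lt y hab]
    exact (J_pos (hy' ⟨(a, b), hab⟩)).le
  -- strict sign/size facts for entries adjacent to k
  have hExt : ∀ a b : Fin n, a ≠ b → (a = k ∨ b = k) →
      extSign ε₁ a b * (mk y) a b ∈ Ioo (1/2 : ℝ) 1 := by
    intro a b hne hk
    rcases lt_trichotomy a b with h | h | h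
    · have hJ : J k ⟨(a, b), h⟩ = Ioo (1/2 : ℝ) 1 := if_pos hk
      have hmem := hy' ⟨(a, b), h⟩
      rw [hA a b h hk, hJ] at hmem
      have hE : extSign ε₁ a b = signOf (ε₁ a b) := if_pos h
      rw [hE, mk_lt y h]
      exact hmem
    · exact absurd h hne
    · have hk' : b = k ∨ a = k := Or.symm hk
      have hJ : J k ⟨(b, a), h⟩ = Ioo (1/2 : ℝ) 1 := if_pos hk'
      have hmem := hy' ⟨(b, a), h⟩
      rw [hA b a h hk', hJ] at hmem
      have hE : extSign ε₁ a b = -signOf (ε₁ b a) := if_neg (asymm h)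
      rw [hE, mk_gt y h]
      rw [show -signOf (ε₁ b a) * -y ⟨(b, a), h⟩ = signOf (ε₁ b a) * y ⟨(b, a), h⟩ by ring]
      exact hmem
  have hsmall : ∀ a b : Fin n, a < b → ¬(a = k ∨ b = k) →
      signOf (ε a b) * (mk y) a b ∈ Ioo (0 : ℝ) (1/4) := by
    intro a b hab hc
    have hJ : J k ⟨(a, b), hab⟩ = Ioo (0 : ℝ) (1/4) := if_neg hc
    have hmem := hy' ⟨(a, b), hab⟩
    rw [hJ] at hmem
    rw [mk_lt y hab]
    exact hmem
  -- value of the mutated matrix at non-k pairs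
  have mutVal : ∀ a b : Fin n, a < b → a ≠ k → b ≠ k →
      mutate k (mk y) a b = (mk y) a b +
        (if extSign ε₁ a k = extSign ε₁ k b then extSign ε₁ a k * ((mk y) a k * (mk y) k b)
         else 0) := by
    intro a b hab hak hbk
    have hu := hExt a k hak (Or.inr rfl)
    have hv := hExt k b (fun h => hbk h.symm) (Or.inl rfl)
    unfold mutate
    rw [if_neg (by tauto)]
    rcases extSign_cases ε₁ a k with h1 | h1 <;> rw [h1] at hu ⊢ <;>
        rcases extSign_cases ε₁ k b with h2 | h2 <;> rw [h2] at hv ⊢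
    · have hu' : 0 < mk y a k := by have := hu.1; linarith
      have hv' : 0 < mk y k b := by have := hv.1; linarith
      rw [if_pos ⟨hu', hv'⟩, if_pos rfl]
      ring1
    · have hu' : 0 < mk y a k := by have := hu.1; linarith
      have hv' : mk y k b < 0 := by have := hv.1; linarith
      rw [if_neg (fun h => absurd h.2 (by linarith)),
        if_neg (fun h => absurd h.1 (by linarith)),
        if_neg (by norm_num : ¬((1 : ℝ) = -1)), add_zero]
    · have hu' : mk y a k < 0 := by have := hu.1; linarith
      have hv' : 0 < mk y k b := by have := hv.1; linarith
      rw [if_neg (fun h => absurd h.1 (by linarith)),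
        if_neg (fun h => absurd h.2 (by linarith)),
        if_neg (by norm_num : ¬((-1 : ℝ) = 1)), add_zero]
    · have hu' : mk y a k < 0 := by have := hu.1; linarith
      have hv' : mk y k b < 0 := by have := hv.1; linarith
      rw [if_neg (fun h => absurd h.1 (by linarith)), if_pos ⟨hu', hv'⟩, if_pos rfl]
      ring1
  -- entries of the mutated matrix agree with the polynomial map M
  have hEnt : entries (mutate k (mk y)) = fun p => eval y (M ε₁ k p) := by
    funext p
    obtain ⟨⟨a, b⟩, hab⟩ := p
    show mutate k (mk y) a b = eval y (M ε₁ k ⟨(a, b), hab⟩)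
    unfold M
    by_cases hc : a = k ∨ b = k
    · rw [if_pos hc]
      simp only [map_neg, eval_X]
      show mutate k (mk y) a b = -y ⟨(a, b), hab⟩
      unfold mutate
      rw [if_pos hc, mk_lt y hab]
    · rw [if_neg hc,
        mutVal a b hab (fun h => hc (Or.inl h)) (fun h => hc (Or.inr h))]
      split_ifs with hs
      · simp only [map_add, _root_.map_mul, eval_X, eval_C, eval_ent]
        rw [mk_lt y hab]
      · simp only [eval_X]
        rw [mk_lt y hab, add_zero]
  -- the mutated matrix lies in the carriage of eps3
  have hcar3 : InCarriage (eps3 ε₁ k) (mutate k (mk y)) := by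
    intro a b hab
    unfold eps3
    by_cases hc : a = k ∨ b = k
    · rw [if_pos hc, signOf_not]
      have hval : mutate k (mk y) a b = -((mk y) a b) := by unfold mutate; rw [if_pos hc]
      rw [hval, neg_mul_neg]
      have hmem := hy' ⟨(a, b), hab⟩
      rw [hA a b hab hc] at hmem
      rw [mk_lt y hab]
      exact (J_pos hmem).le
    · have hak : a ≠ k := fun h => hc (Or.inl h)
      have hbk : b ≠ k := fun h => hc (Or.inr h)
      rw [if_neg hc]
      by_cases hss : extSign ε₁ a k = extSign ε₁ k b
      · rw [if_pos hss, signOf_decide_pos (extSign_cases ε₁ a k),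
          mutVal a b hab hak hbk, if_pos hss]
        have hu := hExt a k hak (Or.inr rfl)
        have hv := hExt k b (fun h => hbk h.symm) (Or.inl rfl)
        rw [← hss] at hv
        have hw := hsmall a b hab hc
        obtain ⟨hw1, hw2⟩ := hw
        rcases extSign_cases ε₁ a k with h1 | h1 <;> rw [h1] at hu hv ⊢ <;>
            obtain ⟨hu1, hu2⟩ := hu <;> obtain ⟨hv1, hv2⟩ := hv <;>
            rcases signOf_cases (ε a b) with h2 | h2 <;> rw [h2] at hw1 hw2 <;>
          nlinarith [hu1, hu2, hv1, hv2, hw1, hw2]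
      · rw [if_neg hss, mutVal a b hab hak hbk, if_neg hss, add_zero]
        have hmem := hy' ⟨(a, b), hab⟩
        rw [hB a b hab hc hss] at hmem
        rw [mk_lt y hab]
        exact (J_pos hmem).le
  -- chain of equalities
  have e1 : F (mk y) = eval y (P ε) := by
    have h := hP ε (mk y) hq hcar
    rwa [entries_mk] at h
  have e2 : F (mutate k (mk y)) = eval (entries (mutate k (mk y))) (P (eps3 ε₁ k)) :=
    hP _ _ (isQuiver_mutate k hq) hcar3
  rw [eval_bind₁', ← hEnt, ← e2, hinv k (mk y) hq, e1]

end Stmt1Aux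


/-- If two sign patterns differ only in the sign of the single entry `x_{ij}`, and there
is a vertex `k ∉ {i, j}` such that the common pattern assigns the same sign to `x_{ik}`
and `x_{kj}`, then the corresponding polynomials of a mutation-invariant carriage-wise
polynomial function coincide. -/
theorem statement1 (n : ℕ) (hn : 2 ≤ n)
    (F : Matrix (Fin n) (Fin n) ℝ → ℝ)
    (P : (Fin n → Fin n → Bool) → MvPolynomial (QIdx n) ℝ)
    (hP : ∀ (ε : Fin n → Fin n → Bool) (X : Matrix (Fin n) (Fin n) ℝ),
      IsQuiver X → InCarriage ε X → F X = MvPolynomial.eval (entries X) (P ε))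
    (hinv : ∀ (k : Fin n) (X : Matrix (Fin n) (Fin n) ℝ),
      IsQuiver X → F (mutate k X) = F X)
    (ε₁ ε₂ : Fin n → Fin n → Bool) (i j : Fin n) (hij : i < j)
    (hagree : ∀ a b : Fin n, a < b → (a, b) ≠ (i, j) → ε₁ a b = ε₂ a b)
    (hdiff : ε₁ i j ≠ ε₂ i j)
    (k : Fin n) (hki : k ≠ i) (hkj : k ≠ j)
    (hsame : extSign ε₁ i k = extSign ε₁ k j) :
    P ε₁ = P ε₂ := by
  have hA2 : ∀ a b : Fin n, a < b → (a = k ∨ b = k) → ε₂ a b = ε₁ a b := by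
    intro a b hab hk
    refine (hagree a b hab ?_).symm
    intro hpair
    obtain ⟨ha, hb⟩ := Prod.mk.injEq .. ▸ hpair
    rcases hk with rfl | rfl
    · exact hki ha
    · exact hkj hb
  have hB2 : ∀ a b : Fin n, a < b → ¬(a = k ∨ b = k) →
      extSign ε₁ a k ≠ extSign ε₁ k b → ε₂ a b = ε₁ a b := by
    intro a b hab _ hne
    refine (hagree a b hab ?_).symm
    intro hpair
    obtain ⟨ha, hb⟩ := Prod.mk.injEq .. ▸ hpair
    subst ha; subst hb
    exact hne hsame
  have h1 := Stmt1Aux.key_claim F P hP hinv ε₁ k ε₁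
    (fun _ _ _ _ => rfl) (fun _ _ _ _ _ => rfl)
  have h2 := Stmt1Aux.key_claim F P hP hinv ε₁ k ε₂ hA2 hB2
  rw [h1, h2]
end

section
/- Let F be a carriage-wise polynomial function on 4-quivers that is invariant under all cluster mutations μ_1, μ_2, μ_3, μ_4. Then F coincides with a single polynomial in the six entries; that is, all the polynomials P_ε (over all 2⁶ sign patterns ε) are equal. -/
open Matrix

namespace S4

abbrev Pat := Fin 4 → Fin 4 → Bool

/-- Bool-sign of entry `X i j` in carriage `ε`, for `i ≠ j`. -/
def sg (ε : Pat) (i j : Fin 4) : Bool := if i < j then ε i j else !(ε j i)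

/-- orientation sign -/
noncomputable def orn (i j : Fin 4) : ℝ := if i < j then 1 else -1

def pidx (i j : Fin 4) (h : i ≠ j) : QIdx 4 :=
  if hij : i < j then ⟨(i, j), hij⟩ else ⟨(j, i), (h.lt_or_gt).resolve_left hij⟩

noncomputable def toMat (x : QIdx 4 → ℝ) : Matrix (Fin 4) (Fin 4) ℝ :=
  fun i j => if h : i < j then x ⟨(i, j), h⟩ else if h' : j < i then -x ⟨(j, i), h'⟩ else 0

lemma isQuiver_iff {n : ℕ} (X : Matrix (Fin n) (Fin n) ℝ) :
    IsQuiver X ↔ ∀ i j, X j i = -X i j := by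
  unfold IsQuiver
  rw [← Matrix.ext_iff]
  constructor
  · intro h i j; have := h i j; simp only [Matrix.transpose_apply, Matrix.neg_apply] at this
    exact this
  · intro h i j; simp only [Matrix.transpose_apply, Matrix.neg_apply]; exact h i j

lemma toMat_isQuiver (x : QIdx 4 → ℝ) : IsQuiver (toMat x) := by
  rw [isQuiver_iff]
  intro i j
  unfold toMat
  rcases lt_trichotomy i j with h | h | h
  · rw [dif_neg (show ¬ j < i by omega), dif_pos h, dif_pos h]
  · subst h; simp
  · rw [dif_pos h, dif_neg (show ¬ i < j by omega), dif_pos h, neg_neg]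

lemma entries_toMat (x : QIdx 4 → ℝ) : entries (toMat x) = x := by
  funext p
  unfold entries toMat
  rw [dif_pos p.2]

lemma toMat_upper (x : QIdx 4 → ℝ) {i j : Fin 4} (h : i < j) :
    toMat x i j = x ⟨(i, j), h⟩ := by
  unfold toMat; rw [dif_pos h]

lemma toMat_eq (x : QIdx 4 → ℝ) {i j : Fin 4} (h : i ≠ j) :
    toMat x i j = orn i j * x (pidx i j h) := by
  unfold toMat orn pidx
  rcases h.lt_or_gt with h' | h'
  · rw [dif_pos h', if_pos h', dif_pos h', one_mul]
  · rw [dif_neg (by omega), dif_pos h', if_neg (by omega), dif_neg (by omega), neg_one_mul]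

lemma signOf_mul_self (b : Bool) : signOf b * signOf b = 1 := by cases b <;> simp [signOf]

lemma signOf_not (b : Bool) : signOf (!b) = -signOf b := by cases b <;> simp [signOf]

/-- upper-pair value of a pattern -/
def epv (ε : Pat) (p : QIdx 4) : Bool := ε p.1.1 p.1.2

lemma sg_toMat (ε : Pat) (x : QIdx 4 → ℝ) {i j : Fin 4} (h : i ≠ j) :
    signOf (sg ε i j) * toMat x i j = signOf (epv ε (pidx i j h)) * x (pidx i j h) := by
  unfold sg epv pidx
  rcases h.lt_or_gt with h' | h'
  · rw [if_pos h', dif_pos h', toMat_upper x h']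
  · rw [if_neg (by omega), dif_neg (by omega)]
    have : toMat x i j = -x ⟨(j, i), h'⟩ := by
      unfold toMat; rw [dif_neg (by omega), dif_pos h']
    rw [this, signOf_not]
    ring

open MvPolynomial in
lemma analytic_eval (p : MvPolynomial (QIdx 4) ℝ) :
    AnalyticOnNhd ℝ (fun x : QIdx 4 → ℝ => MvPolynomial.eval x p) Set.univ := by
  induction p using MvPolynomial.induction_on with
  | C a => simpa using (analyticOnNhd_const : AnalyticOnNhd ℝ (fun _ : QIdx 4 → ℝ => a) Set.univ)
  | add p q hp hq => simpa using (show AnalyticOnNhd ℝ (fun x : QIdx 4 → ℝ => eval x p + eval x q) Set.univ from hp.add hq)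
  | mul_X p i hp =>
      have h2 : AnalyticOnNhd ℝ (fun x : QIdx 4 → ℝ => x i) Set.univ :=
        (ContinuousLinearMap.proj (R := ℝ) (φ := fun _ : QIdx 4 => ℝ) i).analyticOnNhd _
      simpa using hp.mul h2

open MvPolynomial in
lemma dense_eq {p q : MvPolynomial (QIdx 4) ℝ} (c r : QIdx 4 → ℝ) (hr : ∀ i, 0 < r i)
    (h : ∀ x : QIdx 4 → ℝ, (∀ i, |x i - c i| < r i) → eval x p = eval x q) : p = q := by
  have hopen : IsOpen {x : QIdx 4 → ℝ | ∀ i, |x i - c i| < r i} := by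
    have : {x : QIdx 4 → ℝ | ∀ i, |x i - c i| < r i}
        = ⋂ i, (fun x : QIdx 4 → ℝ => x i) ⁻¹' Metric.ball (c i) (r i) := by
      ext x; simp [Real.dist_eq]
    rw [this]
    exact isOpen_iInter_of_finite fun i =>
      (Metric.isOpen_ball).preimage (continuous_apply i)
  have hc : c ∈ {x : QIdx 4 → ℝ | ∀ i, |x i - c i| < r i} := by
    intro i; simpa using hr i
  have heq : Set.EqOn (fun x : QIdx 4 → ℝ => eval x p) (fun x => eval x q) Set.univ := by
    apply AnalyticOnNhd.eqOn_of_preconnected_of_eventuallyEq (analytic_eval p)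
      (analytic_eval q) isPreconnected_univ (Set.mem_univ c)
    exact Filter.eventually_of_mem (hopen.mem_nhds hc) (fun x hx => h x hx)
  exact MvPolynomial.funext fun x => heq (Set.mem_univ x)

lemma mutate_isQuiver {n : ℕ} (k : Fin n) {X : Matrix (Fin n) (Fin n) ℝ}
    (hX : IsQuiver X) : IsQuiver (mutate k X) := by
  rw [isQuiver_iff] at hX ⊢
  intro i j
  unfold mutate
  by_cases hk : i = k ∨ j = k
  · rw [if_pos (Or.symm hk), if_pos hk, hX i j]
  · rw [if_neg (fun h => hk (Or.symm h)), if_neg hk]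
    have h1 : X j k = -X k j := hX k j
    have h2 : X k i = -X i k := hX i k
    have h3 : X j i = -X i j := hX i j
    by_cases c1 : 0 < X i k ∧ 0 < X k j
    · rw [if_pos c1, if_neg (by intro hc; rcases hc with ⟨hc1, _⟩; linarith [c1.2]),
        if_pos (by constructor <;> [linarith [c1.2]; linarith [c1.1]])]
      rw [h1, h2, h3]; ring
    · rw [if_neg c1]
      by_cases c2 : X i k < 0 ∧ X k j < 0
      · rw [if_pos c2, if_pos (by constructor <;> [linarith [c2.2]; linarith [c2.1]])]
        rw [h1, h2, h3]; ring
      · rw [if_neg c2, if_neg, if_neg, h3]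
        · intro hc; rcases hc with ⟨hc1, hc2⟩
          rw [h1] at hc1; rw [h2] at hc2
          exact c1 ⟨by linarith, by linarith⟩
        · intro hc; rcases hc with ⟨hc1, hc2⟩
          rw [h1] at hc1; rw [h2] at hc2
          exact c2 ⟨by linarith, by linarith⟩

/-- small helpers about signOf intervals -/
lemma box_mem {b : Bool} {m r x : ℝ} (h : |x - signOf b * m| < r) :
    m - r < signOf b * x ∧ signOf b * x < m + r := by
  rcases abs_lt.mp h with ⟨h1, h2⟩
  cases b <;> simp [signOf] at * <;> constructor <;> linarith

lemma signOf_interval {b : Bool} {t lo hi : ℝ} (h0 : 0 ≤ lo)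
    (h1 : lo < signOf b * t) (h2 : signOf b * t < hi) : -hi < t ∧ t < hi := by
  cases b <;> simp [signOf] at h1 h2 <;> constructor <;> linarith

lemma signOf_mul_bounds {b : Bool} {t c : ℝ} (h1 : -c ≤ t) (h2 : t ≤ c) :
    -c ≤ signOf b * t ∧ signOf b * t ≤ c := by
  cases b <;> simp [signOf] <;> constructor <;> linarith

lemma pidx_fst_mem (i j : Fin 4) (h : i ≠ j) :
    (pidx i j h).1.1 = i ∨ (pidx i j h).1.2 = i := by
  unfold pidx; split_ifs
  · left; rfl
  · right; rfl

lemma pidx_snd_mem (i j : Fin 4) (h : i ≠ j) :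
    (pidx i j h).1.1 = j ∨ (pidx i j h).1.2 = j := by
  unfold pidx; split_ifs
  · right; rfl
  · left; rfl

noncomputable def corrd (ε : Pat) (k i j : Fin 4) : ℝ :=
  if sg ε i k = sg ε k j then (if sg ε i k then 1 else -1) * (orn i k * orn k j) else 0

noncomputable def mMap (k : Fin 4) (ε : Pat) (p : QIdx 4) : MvPolynomial (QIdx 4) ℝ :=
  if h : p.1.1 = k ∨ p.1.2 = k then - MvPolynomial.X p
  else MvPolynomial.X p + MvPolynomial.C (corrd ε k p.1.1 p.1.2) *
    (MvPolynomial.X (pidx p.1.1 k (not_or.mp h).1) *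
     MvPolynomial.X (pidx k p.1.2 (fun hh => (not_or.mp h).2 hh.symm)))

def epsNew (a b k : Fin 4) (ε : Pat) : Pat := fun i j =>
  if i = k ∨ j = k then !(ε i j) else if i = a ∧ j = b then sg ε a k else ε i j

noncomputable def mag (a b k : Fin 4) (p : QIdx 4) : ℝ :=
  if p.1.1 = k ∨ p.1.2 = k then 3/2 else if p.1.1 = a ∧ p.1.2 = b then 1/4 else 15

noncomputable def rad (a b k : Fin 4) (p : QIdx 4) : ℝ :=
  if p.1.1 = k ∨ p.1.2 = k then 1/2 else if p.1.1 = a ∧ p.1.2 = b then 1/4 else 5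

noncomputable def ctr (a b k : Fin 4) (ε : Pat) (p : QIdx 4) : ℝ :=
  signOf (epv ε p) * mag a b k p

lemma eval_mMap_k (k : Fin 4) (ε : Pat) (x : QIdx 4 → ℝ) {i j : Fin 4} (hij : i < j)
    (hk : i = k ∨ j = k) :
    MvPolynomial.eval x (mMap k ε ⟨(i, j), hij⟩) = -x ⟨(i, j), hij⟩ := by
  unfold mMap
  rw [dif_pos hk]
  simp

lemma eval_mMap_nk (k : Fin 4) (ε : Pat) (x : QIdx 4 → ℝ) {i j : Fin 4} (hij : i < j)
    (hk : ¬(i = k ∨ j = k)) (h1 : i ≠ k) (h2 : k ≠ j) :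
    MvPolynomial.eval x (mMap k ε ⟨(i, j), hij⟩) =
      x ⟨(i, j), hij⟩ + corrd ε k i j * (x (pidx i k h1) * x (pidx k j h2)) := by
  unfold mMap
  rw [dif_neg hk]
  simp

lemma orn_sq (i j : Fin 4) : orn i j * orn i j = 1 := by
  unfold orn; split_ifs <;> norm_num

lemma eval_bind1 (x : QIdx 4 → ℝ) (g : QIdx 4 → MvPolynomial (QIdx 4) ℝ)
    (φ : MvPolynomial (QIdx 4) ℝ) :
    MvPolynomial.eval x (MvPolynomial.bind₁ g φ) =
      MvPolynomial.eval (fun p => MvPolynomial.eval x (g p)) φ := by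
  simpa using MvPolynomial.eval₂Hom_bind₁ (RingHom.id ℝ) x g φ

lemma wall
    (F : Matrix (Fin 4) (Fin 4) ℝ → ℝ)
    (P : Pat → MvPolynomial (QIdx 4) ℝ)
    (hP : ∀ (ε : Pat) (X : Matrix (Fin 4) (Fin 4) ℝ),
      IsQuiver X → InCarriage ε X → F X = MvPolynomial.eval (entries X) (P ε))
    (hinv : ∀ (k : Fin 4) (X : Matrix (Fin 4) (Fin 4) ℝ),
      IsQuiver X → F (mutate k X) = F X)
    (a b k : Fin 4) (hab : a < b) (hka : k ≠ a) (hkb : k ≠ b)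
    (ε : Pat) (hcond : sg ε a k = sg ε k b) :
    P ε = MvPolynomial.bind₁ (mMap k ε) (P (epsNew a b k ε)) := by
  apply dense_eq (ctr a b k ε) (rad a b k) (fun p => by unfold rad; split_ifs <;> norm_num)
  intro x hx
  have hbox : ∀ p : QIdx 4, mag a b k p - rad a b k p < signOf (epv ε p) * x p ∧
      signOf (epv ε p) * x p < mag a b k p + rad a b k p := by
    intro p
    apply box_mem
    have := hx p
    unfold ctr at this
    exact this
  have hclsk : ∀ p : QIdx 4, (p.1.1 = k ∨ p.1.2 = k) →
      1 < signOf (epv ε p) * x p ∧ signOf (epv ε p) * x p < 2 := by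
    intro p hp
    have h := hbox p
    unfold mag rad at h
    rw [if_pos hp, if_pos hp] at h
    exact ⟨by linarith [h.1], by linarith [h.2]⟩
  have hclsab : ∀ p : QIdx 4, ¬(p.1.1 = k ∨ p.1.2 = k) → (p.1.1 = a ∧ p.1.2 = b) →
      0 < signOf (epv ε p) * x p ∧ signOf (epv ε p) * x p < 1/2 := by
    intro p hp hp2
    have h := hbox p
    unfold mag rad at h
    rw [if_neg hp, if_neg hp, if_pos hp2, if_pos hp2] at h
    exact ⟨by linarith [h.1], by linarith [h.2]⟩
  have hclso : ∀ p : QIdx 4, ¬(p.1.1 = k ∨ p.1.2 = k) → ¬(p.1.1 = a ∧ p.1.2 = b) →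
      10 < signOf (epv ε p) * x p ∧ signOf (epv ε p) * x p < 20 := by
    intro p hp hp2
    have h := hbox p
    unfold mag rad at h
    rw [if_neg hp, if_neg hp, if_neg hp2, if_neg hp2] at h
    exact ⟨by linarith [h.1], by linarith [h.2]⟩
  have hpos : ∀ p : QIdx 4, 0 < signOf (epv ε p) * x p := by
    intro p
    by_cases h1 : p.1.1 = k ∨ p.1.2 = k
    · linarith [(hclsk p h1).1]
    · by_cases h2 : p.1.1 = a ∧ p.1.2 = b
      · exact (hclsab p h1 h2).1
      · linarith [(hclso p h1 h2).1]
  set X := toMat x with hXdef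
  have hQ : IsQuiver X := toMat_isQuiver x
  have hXu : ∀ (i j : Fin 4) (h : i < j), X i j = x ⟨(i, j), h⟩ :=
    fun i j h => toMat_upper x h
  have hC : InCarriage ε X := by
    intro i j hij
    rw [hXu i j hij]
    exact le_of_lt (hpos ⟨(i, j), hij⟩)
  have hXik : ∀ i : Fin 4, ∀ h : i ≠ k,
      1 < signOf (sg ε i k) * X i k ∧ signOf (sg ε i k) * X i k < 2 := by
    intro i h
    rw [sg_toMat ε x h]
    exact hclsk _ (pidx_snd_mem i k h)
  have hXkj : ∀ j : Fin 4, ∀ h : k ≠ j,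
      1 < signOf (sg ε k j) * X k j ∧ signOf (sg ε k j) * X k j < 2 := by
    intro j h
    rw [sg_toMat ε x h]
    exact hclsk _ (pidx_fst_mem k j h)
  have hmain : ∀ (i j : Fin 4) (hij : i < j),
      mutate k X i j = MvPolynomial.eval x (mMap k ε ⟨(i, j), hij⟩) ∧
      0 ≤ signOf (epsNew a b k ε i j) * mutate k X i j := by
    intro i j hij
    by_cases hk : i = k ∨ j = k
    · have hY : mutate k X i j = -X i j := by unfold mutate; rw [if_pos hk]
      refine ⟨?_, ?_⟩
      · rw [hY, eval_mMap_k k ε x hij hk, hXu i j hij]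
      · rw [hY]
        have he : epsNew a b k ε i j = !(ε i j) := by unfold epsNew; rw [if_pos hk]
        rw [he, signOf_not]
        have hp := hpos ⟨(i, j), hij⟩
        have hev : epv ε ⟨(i, j), hij⟩ = ε i j := rfl
        rw [hev] at hp
        rw [hXu i j hij]
        nlinarith [hp]
    · obtain ⟨hik, hjk⟩ := not_or.mp hk
      have hkj : k ≠ j := fun h => hjk h.symm
      have f1 := hXik i hik
      have f2 := hXkj j hkj
      have hxik : X i k = orn i k * x (pidx i k hik) := toMat_eq x hik
      have hxkj : X k j = orn k j * x (pidx k j hkj) := toMat_eq x hkj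
      have heval := eval_mMap_nk k ε x hij hk hik hkj
      have hxij : X i j = x ⟨(i, j), hij⟩ := hXu i j hij
      have hpx := hpos ⟨(i, j), hij⟩
      have hev : epv ε ⟨(i, j), hij⟩ = ε i j := rfl
      rw [hev] at hpx
      cases hs1 : sg ε i k <;> cases hs2 : sg ε k j <;>
        rw [hs1] at f1 <;> rw [hs2] at f2 <;> simp only [signOf] at f1 f2 <;>
        simp only [Bool.false_eq_true, if_false, if_true, neg_mul, one_mul] at f1 f2
      -- case false false
      · have hc1 : ¬(0 < X i k ∧ 0 < X k j) := by intro hc; linarith [hc.1, f1.1]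
        have hc2 : X i k < 0 ∧ X k j < 0 := ⟨by linarith [f1.1], by linarith [f2.1]⟩
        have hY : mutate k X i j = X i j - X i k * X k j := by
          unfold mutate; rw [if_neg hk, if_neg hc1, if_pos hc2]
        have hcd : corrd ε k i j = -(orn i k * orn k j) := by
          unfold corrd; rw [hs1, hs2]; simp
        have hprod : 1 < X i k * X k j ∧ X i k * X k j < 4 := by
          constructor <;> nlinarith [f1.1, f1.2, f2.1, f2.2]
        refine ⟨?_, ?_⟩
        · rw [hY, heval, hcd, hxij, hxik, hxkj]; ring
        · by_cases hab2 : i = a ∧ j = b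
          · have he : epsNew a b k ε i j = sg ε a k := by
              unfold epsNew; rw [if_neg hk, if_pos hab2]
            have hsak : sg ε a k = false := by rw [← hab2.1]; exact hs1
            rw [he, hsak, hY]
            have hsm := hclsab ⟨(i, j), hij⟩ hk hab2
            rw [hev] at hsm
            have hxb := signOf_interval (le_refl 0) hpx hsm.2
            rw [hxij]
            simp only [signOf, Bool.false_eq_true, if_false]
            nlinarith [hxb.1, hxb.2, hprod.1]
          · have he : epsNew a b k ε i j = ε i j := by
              unfold epsNew; rw [if_neg hk, if_neg hab2]
            rw [he, hY]
            have hsm := hclso ⟨(i, j), hij⟩ hk hab2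
            rw [hev] at hsm
            have hb2 := signOf_mul_bounds (b := ε i j) (t := X i k * X k j) (c := 4)
              (by linarith [hprod.1]) (by linarith [hprod.2])
            have : signOf (ε i j) * (X i j - X i k * X k j)
                = signOf (ε i j) * X i j - signOf (ε i j) * (X i k * X k j) := by ring
            rw [this, hxij]
            linarith [hsm.1, hb2.1, hb2.2]
      -- case false true
      · have hc1 : ¬(0 < X i k ∧ 0 < X k j) := by intro hc; linarith [hc.1, f1.1]
        have hc2 : ¬(X i k < 0 ∧ X k j < 0) := by intro hc; linarith [hc.2, f2.1]
        have hY : mutate k X i j = X i j := by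
          unfold mutate; rw [if_neg hk, if_neg hc1, if_neg hc2]
        have hcd : corrd ε k i j = 0 := by
          unfold corrd; rw [hs1, hs2]; simp
        refine ⟨?_, ?_⟩
        · rw [hY, heval, hcd, hxij]; ring
        · by_cases hab2 : i = a ∧ j = b
          · exfalso
            rw [← hab2.1, hs1] at hcond
            rw [← hab2.2, hs2] at hcond
            simp at hcond
          · have he : epsNew a b k ε i j = ε i j := by
              unfold epsNew; rw [if_neg hk, if_neg hab2]
            rw [he, hY, hxij]
            exact le_of_lt hpx
      -- case true false
      · have hc1 : ¬(0 < X i k ∧ 0 < X k j) := by intro hc; linarith [hc.2, f2.1]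
        have hc2 : ¬(X i k < 0 ∧ X k j < 0) := by intro hc; linarith [hc.1, f1.1]
        have hY : mutate k X i j = X i j := by
          unfold mutate; rw [if_neg hk, if_neg hc1, if_neg hc2]
        have hcd : corrd ε k i j = 0 := by
          unfold corrd; rw [hs1, hs2]; simp
        refine ⟨?_, ?_⟩
        · rw [hY, heval, hcd, hxij]; ring
        · by_cases hab2 : i = a ∧ j = b
          · exfalso
            rw [← hab2.1, hs1] at hcond
            rw [← hab2.2, hs2] at hcond
            simp at hcond
          · have he : epsNew a b k ε i j = ε i j := by
              unfold epsNew; rw [if_neg hk, if_neg hab2]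
            rw [he, hY, hxij]
            exact le_of_lt hpx
      -- case true true
      · have hc1 : 0 < X i k ∧ 0 < X k j := ⟨by linarith [f1.1], by linarith [f2.1]⟩
        have hY : mutate k X i j = X i j + X i k * X k j := by
          unfold mutate; rw [if_neg hk, if_pos hc1]
        have hcd : corrd ε k i j = orn i k * orn k j := by
          unfold corrd; rw [hs1, hs2]; simp
        have hprod : 1 < X i k * X k j ∧ X i k * X k j < 4 := by
          constructor <;> nlinarith [f1.1, f1.2, f2.1, f2.2]
        refine ⟨?_, ?_⟩
        · rw [hY, heval, hcd, hxij, hxik, hxkj]; ring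
        · by_cases hab2 : i = a ∧ j = b
          · have he : epsNew a b k ε i j = sg ε a k := by
              unfold epsNew; rw [if_neg hk, if_pos hab2]
            have hsak : sg ε a k = true := by rw [← hab2.1]; exact hs1
            rw [he, hsak, hY]
            have hsm := hclsab ⟨(i, j), hij⟩ hk hab2
            rw [hev] at hsm
            have hxb := signOf_interval (le_refl 0) hpx hsm.2
            rw [hxij]
            simp only [signOf, if_true]
            nlinarith [hxb.1, hxb.2, hprod.1]
          · have he : epsNew a b k ε i j = ε i j := by
              unfold epsNew; rw [if_neg hk, if_neg hab2]
            rw [he, hY]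
            have hsm := hclso ⟨(i, j), hij⟩ hk hab2
            rw [hev] at hsm
            have hb2 := signOf_mul_bounds (b := ε i j) (t := X i k * X k j) (c := 4)
              (by linarith [hprod.1]) (by linarith [hprod.2])
            have : signOf (ε i j) * (X i j + X i k * X k j)
                = signOf (ε i j) * X i j + signOf (ε i j) * (X i k * X k j) := by ring
            rw [this, hxij]
            linarith [hsm.1, hb2.1, hb2.2]
  have hQY : IsQuiver (mutate k X) := mutate_isQuiver k hQ
  have hCY : InCarriage (epsNew a b k ε) (mutate k X) := fun i j hij => (hmain i j hij).2
  have hentY : entries (mutate k X) = fun p => MvPolynomial.eval x (mMap k ε p) := by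
    funext p
    have h1 := (hmain p.1.1 p.1.2 p.2).1
    unfold entries
    rw [h1]
  have e1 : F X = MvPolynomial.eval x (P ε) := by
    have h := hP ε X hQ hC
    rwa [entries_toMat] at h
  have e2 : F (mutate k X) =
      MvPolynomial.eval x (MvPolynomial.bind₁ (mMap k ε) (P (epsNew a b k ε))) := by
    have h3 := hP (epsNew a b k ε) (mutate k X) hQY hCY
    rw [hentY] at h3
    rw [h3, eval_bind1]
  rw [← e1, ← e2]
  exact (hinv k X hQ).symm

lemma wall2
    (F : Matrix (Fin 4) (Fin 4) ℝ → ℝ)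
    (P : Pat → MvPolynomial (QIdx 4) ℝ)
    (hP : ∀ (ε : Pat) (X : Matrix (Fin 4) (Fin 4) ℝ),
      IsQuiver X → InCarriage ε X → F X = MvPolynomial.eval (entries X) (P ε))
    (hinv : ∀ (k : Fin 4) (X : Matrix (Fin 4) (Fin 4) ℝ),
      IsQuiver X → F (mutate k X) = F X)
    (a b k : Fin 4) (hab : a < b) (hka : k ≠ a) (hkb : k ≠ b)
    (ε₁ ε₂ : Pat) (h : ∀ i j : Fin 4, ¬(i = a ∧ j = b) → ε₁ i j = ε₂ i j)
    (hcond : sg ε₁ a k = sg ε₁ k b) : P ε₁ = P ε₂ := by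
  have hsg : ∀ i j : Fin 4, ¬(i = a ∧ j = b) → ¬(j = a ∧ i = b) → sg ε₁ i j = sg ε₂ i j := by
    intro i j h1 h2
    unfold sg
    split_ifs
    · rw [h i j h1]
    · rw [h j i h2]
  have hsgak : sg ε₁ a k = sg ε₂ a k :=
    hsg a k (fun hc => hkb hc.2) (fun hc => hka hc.1)
  have hsgkb : sg ε₁ k b = sg ε₂ k b :=
    hsg k b (fun hc => hka hc.1) (fun hc => hkb hc.2)
  have hcond2 : sg ε₂ a k = sg ε₂ k b := by rw [← hsgak, ← hsgkb]; exact hcond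
  have hcorr : ∀ u v : Fin 4, corrd ε₁ k u v = corrd ε₂ k u v := by
    intro u v
    unfold corrd
    rw [hsg u k (fun hc => hkb hc.2) (fun hc => hka hc.1),
      hsg k v (fun hc => hka hc.1) (fun hc => hkb hc.2)]
  have hm : mMap k ε₁ = mMap k ε₂ := by
    funext p
    unfold mMap
    split_ifs
    · rfl
    · rw [hcorr]
  have hnew : epsNew a b k ε₁ = epsNew a b k ε₂ := by
    funext i j
    unfold epsNew
    split_ifs with h1 h2
    · rcases h1 with h1 | h1
      · rw [h i j (fun hc => hka (h1.symm.trans hc.1))]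
      · rw [h i j (fun hc => hkb (h1.symm.trans hc.2))]
    · exact hsgak
    · rw [h i j h2]
  calc P ε₁ = MvPolynomial.bind₁ (mMap k ε₁) (P (epsNew a b k ε₁)) :=
        wall F P hP hinv a b k hab hka hkb ε₁ hcond
    _ = MvPolynomial.bind₁ (mMap k ε₂) (P (epsNew a b k ε₂)) := by rw [hm, hnew]
    _ = P ε₂ := (wall F P hP hinv a b k hab hka hkb ε₂ hcond2).symm

lemma upperEq
    (F : Matrix (Fin 4) (Fin 4) ℝ → ℝ)
    (P : Pat → MvPolynomial (QIdx 4) ℝ)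
    (hP : ∀ (ε : Pat) (X : Matrix (Fin 4) (Fin 4) ℝ),
      IsQuiver X → InCarriage ε X → F X = MvPolynomial.eval (entries X) (P ε))
    (ε₁ ε₂ : Pat) (h : ∀ i j : Fin 4, i < j → ε₁ i j = ε₂ i j) : P ε₁ = P ε₂ := by
  apply dense_eq (fun p => signOf (epv ε₁ p)) (fun _ => 1/2) (fun _ => by norm_num)
  intro x hx
  have hb : ∀ p : QIdx 4, 1/2 < signOf (epv ε₁ p) * x p := by
    intro p
    have h2 := box_mem (b := epv ε₁ p) (m := 1) (r := 1/2) (x := x p)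
      (by rw [mul_one]; exact hx p)
    linarith [h2.1]
  have hb2 : ∀ (i j : Fin 4) (hij : i < j), 1/2 < signOf (ε₁ i j) * x ⟨(i, j), hij⟩ := by
    intro i j hij
    have h3 := hb ⟨(i, j), hij⟩
    have hev : epv ε₁ ⟨(i, j), hij⟩ = ε₁ i j := rfl
    rwa [hev] at h3
  have hC1 : InCarriage ε₁ (toMat x) := by
    intro i j hij
    rw [toMat_upper x hij]
    linarith [hb2 i j hij]
  have hC2 : InCarriage ε₂ (toMat x) := by
    intro i j hij
    rw [toMat_upper x hij, ← h i j hij]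
    linarith [hb2 i j hij]
  have e1 := hP ε₁ (toMat x) (toMat_isQuiver x) hC1
  have e2 := hP ε₂ (toMat x) (toMat_isQuiver x) hC2
  rw [entries_toMat] at e1 e2
  rw [← e1, ← e2]

def pat (b1 b2 b3 b4 b5 b6 : Bool) : Pat := fun i j =>
  match i.val, j.val with
  | 0, 1 => b1
  | 0, 2 => b2
  | 0, 3 => b3
  | 1, 2 => b4
  | 1, 3 => b5
  | 2, 3 => b6
  | _, _ => true

lemma norm_pat
    (F : Matrix (Fin 4) (Fin 4) ℝ → ℝ)
    (P : Pat → MvPolynomial (QIdx 4) ℝ)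
    (hP : ∀ (ε : Pat) (X : Matrix (Fin 4) (Fin 4) ℝ),
      IsQuiver X → InCarriage ε X → F X = MvPolynomial.eval (entries X) (P ε))
    (ε : Pat) :
    P ε = P (pat (ε 0 1) (ε 0 2) (ε 0 3) (ε 1 2) (ε 1 3) (ε 2 3)) := by
  apply upperEq F P hP
  intro i j
  fin_cases i <;> fin_cases j <;> intro hij <;>
    first | rfl | exact absurd hij (by decide)

end S4



/-- A carriage-wise polynomial function on 4-quivers invariant under all cluster
mutations is given by a single polynomial: all the polynomials `P ε` coincide. -/
theorem statement4
    (F : Matrix (Fin 4) (Fin 4) ℝ → ℝ)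
    (P : (Fin 4 → Fin 4 → Bool) → MvPolynomial (QIdx 4) ℝ)
    (hP : ∀ (ε : Fin 4 → Fin 4 → Bool) (X : Matrix (Fin 4) (Fin 4) ℝ),
      IsQuiver X → InCarriage ε X → F X = MvPolynomial.eval (entries X) (P ε))
    (hinv : ∀ (k : Fin 4) (X : Matrix (Fin 4) (Fin 4) ℝ),
      IsQuiver X → F (mutate k X) = F X) :
    ∀ ε₁ ε₂ : Fin 4 → Fin 4 → Bool, P ε₁ = P ε₂ := by
  intro ε₁ ε₂
  have big : ∀ b1 b2 b3 b4 b5 b6 : Bool,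
      P (S4.pat b1 b2 b3 b4 b5 b6) = P (S4.pat true true true true true true) := by
    have h_TTTTTT : P (S4.pat true true true true true true) = P (S4.pat true true true true true true) := rfl
    have h_TFTTTT : P (S4.pat true false true true true true) = P (S4.pat true true true true true true) :=
      (S4.wall2 F P hP hinv 0 2 1 (by decide) (by decide) (by decide)
        (S4.pat true false true true true true) (S4.pat true true true true true true) (by decide) (by decide)).trans h_TTTTTT
    have h_TTFTTT : P (S4.pat true true false true true true) = P (S4.pat true true true true true true) :=
      (S4.wall2 F P hP hinv 0 3 1 (by decide) (by decide) (by decide)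
        (S4.pat true true false true true true) (S4.pat true true true true true true) (by decide) (by decide)).trans h_TTTTTT
    have h_TTTTFT : P (S4.pat true true true true false true) = P (S4.pat true true true true true true) :=
      (S4.wall2 F P hP hinv 1 3 2 (by decide) (by decide) (by decide)
        (S4.pat true true true true false true) (S4.pat true true true true true true) (by decide) (by decide)).trans h_TTTTTT
    have h_FFTTTT : P (S4.pat false false true true true true) = P (S4.pat true true true true true true) :=
      (S4.wall2 F P hP hinv 0 1 2 (by decide) (by decide) (by decide)
        (S4.pat false false true true true true) (S4.pat true false true true true true) (by decide) (by decide)).trans h_TFTTTT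
    have h_TFFTTT : P (S4.pat true false false true true true) = P (S4.pat true true true true true true) :=
      (S4.wall2 F P hP hinv 0 3 1 (by decide) (by decide) (by decide)
        (S4.pat true false false true true true) (S4.pat true false true true true true) (by decide) (by decide)).trans h_TFTTTT
    have h_TFTFTT : P (S4.pat true false true false true true) = P (S4.pat true true true true true true) :=
      (S4.wall2 F P hP hinv 1 2 0 (by decide) (by decide) (by decide)
        (S4.pat true false true false true true) (S4.pat true false true true true true) (by decide) (by decide)).trans h_TFTTTT
    have h_TFTTFT : P (S4.pat true false true true false true) = P (S4.pat true true true true true true) :=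
      (S4.wall2 F P hP hinv 1 3 2 (by decide) (by decide) (by decide)
        (S4.pat true false true true false true) (S4.pat true false true true true true) (by decide) (by decide)).trans h_TFTTTT
    have h_TFTTTF : P (S4.pat true false true true true false) = P (S4.pat true true true true true true) :=
      (S4.wall2 F P hP hinv 2 3 0 (by decide) (by decide) (by decide)
        (S4.pat true false true true true false) (S4.pat true false true true true true) (by decide) (by decide)).trans h_TFTTTT
    have h_FTFTTT : P (S4.pat false true false true true true) = P (S4.pat true true true true true true) :=
      (S4.wall2 F P hP hinv 0 1 3 (by decide) (by decide) (by decide)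
        (S4.pat false true false true true true) (S4.pat true true false true true true) (by decide) (by decide)).trans h_TTFTTT
    have h_TTFTFT : P (S4.pat true true false true false true) = P (S4.pat true true true true true true) :=
      (S4.wall2 F P hP hinv 1 3 0 (by decide) (by decide) (by decide)
        (S4.pat true true false true false true) (S4.pat true true false true true true) (by decide) (by decide)).trans h_TTFTTT
    have h_TTFTTF : P (S4.pat true true false true true false) = P (S4.pat true true true true true true) :=
      (S4.wall2 F P hP hinv 2 3 0 (by decide) (by decide) (by decide)
        (S4.pat true true false true true false) (S4.pat true true false true true true) (by decide) (by decide)).trans h_TTFTTT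
    have h_FTTTFT : P (S4.pat false true true true false true) = P (S4.pat true true true true true true) :=
      (S4.wall2 F P hP hinv 0 1 3 (by decide) (by decide) (by decide)
        (S4.pat false true true true false true) (S4.pat true true true true false true) (by decide) (by decide)).trans h_TTTTFT
    have h_TTTFFT : P (S4.pat true true true false false true) = P (S4.pat true true true true true true) :=
      (S4.wall2 F P hP hinv 1 2 3 (by decide) (by decide) (by decide)
        (S4.pat true true true false false true) (S4.pat true true true true false true) (by decide) (by decide)).trans h_TTTTFT
    have h_TTTTFF : P (S4.pat true true true true false false) = P (S4.pat true true true true true true) :=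
      (S4.wall2 F P hP hinv 2 3 1 (by decide) (by decide) (by decide)
        (S4.pat true true true true false false) (S4.pat true true true true false true) (by decide) (by decide)).trans h_TTTTFT
    have h_FFTTFT : P (S4.pat false false true true false true) = P (S4.pat true true true true true true) :=
      (S4.wall2 F P hP hinv 1 3 0 (by decide) (by decide) (by decide)
        (S4.pat false false true true false true) (S4.pat false false true true true true) (by decide) (by decide)).trans h_FFTTTT
    have h_FFTTTF : P (S4.pat false false true true true false) = P (S4.pat true true true true true true) :=
      (S4.wall2 F P hP hinv 2 3 0 (by decide) (by decide) (by decide)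
        (S4.pat false false true true true false) (S4.pat false false true true true true) (by decide) (by decide)).trans h_FFTTTT
    have h_FFFTTT : P (S4.pat false false false true true true) = P (S4.pat true true true true true true) :=
      (S4.wall2 F P hP hinv 0 1 2 (by decide) (by decide) (by decide)
        (S4.pat false false false true true true) (S4.pat true false false true true true) (by decide) (by decide)).trans h_TFFTTT
    have h_TFFFTT : P (S4.pat true false false false true true) = P (S4.pat true true true true true true) :=
      (S4.wall2 F P hP hinv 1 2 0 (by decide) (by decide) (by decide)
        (S4.pat true false false false true true) (S4.pat true false false true true true) (by decide) (by decide)).trans h_TFFTTT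
    have h_TFFTFT : P (S4.pat true false false true false true) = P (S4.pat true true true true true true) :=
      (S4.wall2 F P hP hinv 1 3 0 (by decide) (by decide) (by decide)
        (S4.pat true false false true false true) (S4.pat true false false true true true) (by decide) (by decide)).trans h_TFFTTT
    have h_TFTFTF : P (S4.pat true false true false true false) = P (S4.pat true true true true true true) :=
      (S4.wall2 F P hP hinv 2 3 0 (by decide) (by decide) (by decide)
        (S4.pat true false true false true false) (S4.pat true false true false true true) (by decide) (by decide)).trans h_TFTFTT
    have h_TFTFFT : P (S4.pat true false true false false true) = P (S4.pat true true true true true true) :=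
      (S4.wall2 F P hP hinv 1 2 0 (by decide) (by decide) (by decide)
        (S4.pat true false true false false true) (S4.pat true false true true false true) (by decide) (by decide)).trans h_TFTTFT
    have h_TFTTFF : P (S4.pat true false true true false false) = P (S4.pat true true true true true true) :=
      (S4.wall2 F P hP hinv 2 3 0 (by decide) (by decide) (by decide)
        (S4.pat true false true true false false) (S4.pat true false true true false true) (by decide) (by decide)).trans h_TFTTFT
    have h_TTTTTF : P (S4.pat true true true true true false) = P (S4.pat true true true true true true) :=
      (S4.wall2 F P hP hinv 0 2 1 (by decide) (by decide) (by decide)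
        (S4.pat true true true true true false) (S4.pat true false true true true false) (by decide) (by decide)).trans h_TFTTTF
    have h_TFFTTF : P (S4.pat true false false true true false) = P (S4.pat true true true true true true) :=
      (S4.wall2 F P hP hinv 0 3 1 (by decide) (by decide) (by decide)
        (S4.pat true false false true true false) (S4.pat true false true true true false) (by decide) (by decide)).trans h_TFTTTF
    have h_FTTTTT : P (S4.pat false true true true true true) = P (S4.pat true true true true true true) :=
      (S4.wall2 F P hP hinv 0 3 2 (by decide) (by decide) (by decide)
        (S4.pat false true true true true true) (S4.pat false true false true true true) (by decide) (by decide)).trans h_FTFTTT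
    have h_FTFFTT : P (S4.pat false true false false true true) = P (S4.pat true true true true true true) :=
      (S4.wall2 F P hP hinv 1 2 0 (by decide) (by decide) (by decide)
        (S4.pat false true false false true true) (S4.pat false true false true true true) (by decide) (by decide)).trans h_FTFTTT
    have h_FTFTFT : P (S4.pat false true false true false true) = P (S4.pat true true true true true true) :=
      (S4.wall2 F P hP hinv 1 3 2 (by decide) (by decide) (by decide)
        (S4.pat false true false true false true) (S4.pat false true false true true true) (by decide) (by decide)).trans h_FTFTTT
    have h_FTFTTF : P (S4.pat false true false true true false) = P (S4.pat true true true true true true) :=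
      (S4.wall2 F P hP hinv 2 3 0 (by decide) (by decide) (by decide)
        (S4.pat false true false true true false) (S4.pat false true false true true true) (by decide) (by decide)).trans h_FTFTTT
    have h_TTFFFT : P (S4.pat true true false false false true) = P (S4.pat true true true true true true) :=
      (S4.wall2 F P hP hinv 1 2 3 (by decide) (by decide) (by decide)
        (S4.pat true true false false false true) (S4.pat true true false true false true) (by decide) (by decide)).trans h_TTFTFT
    have h_TTFTFF : P (S4.pat true true false true false false) = P (S4.pat true true true true true true) :=
      (S4.wall2 F P hP hinv 2 3 0 (by decide) (by decide) (by decide)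
        (S4.pat true true false true false false) (S4.pat true true false true false true) (by decide) (by decide)).trans h_TTFTFT
    have h_TTFFTF : P (S4.pat true true false false true false) = P (S4.pat true true true true true true) :=
      (S4.wall2 F P hP hinv 1 2 3 (by decide) (by decide) (by decide)
        (S4.pat true true false false true false) (S4.pat true true false true true false) (by decide) (by decide)).trans h_TTFTTF
    have h_FTTFFT : P (S4.pat false true true false false true) = P (S4.pat true true true true true true) :=
      (S4.wall2 F P hP hinv 1 2 0 (by decide) (by decide) (by decide)
        (S4.pat false true true false false true) (S4.pat false true true true false true) (by decide) (by decide)).trans h_FTTTFT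
    have h_FTTTFF : P (S4.pat false true true true false false) = P (S4.pat true true true true true true) :=
      (S4.wall2 F P hP hinv 2 3 1 (by decide) (by decide) (by decide)
        (S4.pat false true true true false false) (S4.pat false true true true false true) (by decide) (by decide)).trans h_FTTTFT
    have h_FFFTFT : P (S4.pat false false false true false true) = P (S4.pat true true true true true true) :=
      (S4.wall2 F P hP hinv 0 3 1 (by decide) (by decide) (by decide)
        (S4.pat false false false true false true) (S4.pat false false true true false true) (by decide) (by decide)).trans h_FFTTFT
    have h_FFTFFT : P (S4.pat false false true false false true) = P (S4.pat true true true true true true) :=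
      (S4.wall2 F P hP hinv 1 2 3 (by decide) (by decide) (by decide)
        (S4.pat false false true false false true) (S4.pat false false true true false true) (by decide) (by decide)).trans h_FFTTFT
    have h_FFTTFF : P (S4.pat false false true true false false) = P (S4.pat true true true true true true) :=
      (S4.wall2 F P hP hinv 2 3 0 (by decide) (by decide) (by decide)
        (S4.pat false false true true false false) (S4.pat false false true true false true) (by decide) (by decide)).trans h_FFTTFT
    have h_FTTTTF : P (S4.pat false true true true true false) = P (S4.pat true true true true true true) :=
      (S4.wall2 F P hP hinv 0 2 3 (by decide) (by decide) (by decide)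
        (S4.pat false true true true true false) (S4.pat false false true true true false) (by decide) (by decide)).trans h_FFTTTF
    have h_FFFTTF : P (S4.pat false false false true true false) = P (S4.pat true true true true true true) :=
      (S4.wall2 F P hP hinv 0 3 2 (by decide) (by decide) (by decide)
        (S4.pat false false false true true false) (S4.pat false false true true true false) (by decide) (by decide)).trans h_FFTTTF
    have h_FFTFTF : P (S4.pat false false true false true false) = P (S4.pat true true true true true true) :=
      (S4.wall2 F P hP hinv 1 2 3 (by decide) (by decide) (by decide)
        (S4.pat false false true false true false) (S4.pat false false true true true false) (by decide) (by decide)).trans h_FFTTTF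
    have h_FFFFTT : P (S4.pat false false false false true true) = P (S4.pat true true true true true true) :=
      (S4.wall2 F P hP hinv 0 1 3 (by decide) (by decide) (by decide)
        (S4.pat false false false false true true) (S4.pat true false false false true true) (by decide) (by decide)).trans h_TFFFTT
    have h_TTFFTT : P (S4.pat true true false false true true) = P (S4.pat true true true true true true) :=
      (S4.wall2 F P hP hinv 0 2 3 (by decide) (by decide) (by decide)
        (S4.pat true true false false true true) (S4.pat true false false false true true) (by decide) (by decide)).trans h_TFFFTT
    have h_TFFFFT : P (S4.pat true false false false false true) = P (S4.pat true true true true true true) :=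
      (S4.wall2 F P hP hinv 1 3 0 (by decide) (by decide) (by decide)
        (S4.pat true false false false false true) (S4.pat true false false false true true) (by decide) (by decide)).trans h_TFFFTT
    have h_TFFFTF : P (S4.pat true false false false true false) = P (S4.pat true true true true true true) :=
      (S4.wall2 F P hP hinv 2 3 1 (by decide) (by decide) (by decide)
        (S4.pat true false false false true false) (S4.pat true false false false true true) (by decide) (by decide)).trans h_TFFFTT
    have h_TFFTFF : P (S4.pat true false false true false false) = P (S4.pat true true true true true true) :=
      (S4.wall2 F P hP hinv 2 3 1 (by decide) (by decide) (by decide)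
        (S4.pat true false false true false false) (S4.pat true false false true false true) (by decide) (by decide)).trans h_TFFTFT
    have h_TTTFTF : P (S4.pat true true true false true false) = P (S4.pat true true true true true true) :=
      (S4.wall2 F P hP hinv 0 2 3 (by decide) (by decide) (by decide)
        (S4.pat true true true false true false) (S4.pat true false true false true false) (by decide) (by decide)).trans h_TFTFTF
    have h_TFTFFF : P (S4.pat true false true false false false) = P (S4.pat true true true true true true) :=
      (S4.wall2 F P hP hinv 1 3 2 (by decide) (by decide) (by decide)
        (S4.pat true false true false false false) (S4.pat true false true false true false) (by decide) (by decide)).trans h_TFTFTF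
    have h_FTTFTT : P (S4.pat false true true false true true) = P (S4.pat true true true true true true) :=
      (S4.wall2 F P hP hinv 1 2 0 (by decide) (by decide) (by decide)
        (S4.pat false true true false true true) (S4.pat false true true true true true) (by decide) (by decide)).trans h_FTTTTT
    have h_FTFFTF : P (S4.pat false true false false true false) = P (S4.pat true true true true true true) :=
      (S4.wall2 F P hP hinv 2 3 0 (by decide) (by decide) (by decide)
        (S4.pat false true false false true false) (S4.pat false true false false true true) (by decide) (by decide)).trans h_FTFFTT
    have h_FTFFFT : P (S4.pat false true false false false true) = P (S4.pat true true true true true true) :=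
      (S4.wall2 F P hP hinv 1 2 0 (by decide) (by decide) (by decide)
        (S4.pat false true false false false true) (S4.pat false true false true false true) (by decide) (by decide)).trans h_FTFTFT
    have h_FTFTFF : P (S4.pat false true false true false false) = P (S4.pat true true true true true true) :=
      (S4.wall2 F P hP hinv 2 3 0 (by decide) (by decide) (by decide)
        (S4.pat false true false true false false) (S4.pat false true false true false true) (by decide) (by decide)).trans h_FTFTFT
    have h_TTFFFF : P (S4.pat true true false false false false) = P (S4.pat true true true true true true) :=
      (S4.wall2 F P hP hinv 2 3 0 (by decide) (by decide) (by decide)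
        (S4.pat true true false false false false) (S4.pat true true false false false true) (by decide) (by decide)).trans h_TTFFFT
    have h_FTTFFF : P (S4.pat false true true false false false) = P (S4.pat true true true true true true) :=
      (S4.wall2 F P hP hinv 1 2 0 (by decide) (by decide) (by decide)
        (S4.pat false true true false false false) (S4.pat false true true true false false) (by decide) (by decide)).trans h_FTTTFF
    have h_FFFFFT : P (S4.pat false false false false false true) = P (S4.pat true true true true true true) :=
      (S4.wall2 F P hP hinv 1 2 3 (by decide) (by decide) (by decide)
        (S4.pat false false false false false true) (S4.pat false false false true false true) (by decide) (by decide)).trans h_FFFTFT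
    have h_FFFTFF : P (S4.pat false false false true false false) = P (S4.pat true true true true true true) :=
      (S4.wall2 F P hP hinv 2 3 1 (by decide) (by decide) (by decide)
        (S4.pat false false false true false false) (S4.pat false false false true false true) (by decide) (by decide)).trans h_FFFTFT
    have h_FFTFTT : P (S4.pat false false true false true true) = P (S4.pat true true true true true true) :=
      (S4.wall2 F P hP hinv 1 3 0 (by decide) (by decide) (by decide)
        (S4.pat false false true false true true) (S4.pat false false true false false true) (by decide) (by decide)).trans h_FFTFFT
    have h_FFTFFF : P (S4.pat false false true false false false) = P (S4.pat true true true true true true) :=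
      (S4.wall2 F P hP hinv 2 3 0 (by decide) (by decide) (by decide)
        (S4.pat false false true false false false) (S4.pat false false true false false true) (by decide) (by decide)).trans h_FFTFFT
    have h_FTTFTF : P (S4.pat false true true false true false) = P (S4.pat true true true true true true) :=
      (S4.wall2 F P hP hinv 1 2 0 (by decide) (by decide) (by decide)
        (S4.pat false true true false true false) (S4.pat false true true true true false) (by decide) (by decide)).trans h_FTTTTF
    have h_FFFFTF : P (S4.pat false false false false true false) = P (S4.pat true true true true true true) :=
      (S4.wall2 F P hP hinv 1 2 3 (by decide) (by decide) (by decide)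
        (S4.pat false false false false true false) (S4.pat false false false true true false) (by decide) (by decide)).trans h_FFFTTF
    have h_TTTFTT : P (S4.pat true true true false true true) = P (S4.pat true true true true true true) :=
      (S4.wall2 F P hP hinv 0 3 1 (by decide) (by decide) (by decide)
        (S4.pat true true true false true true) (S4.pat true true false false true true) (by decide) (by decide)).trans h_TTFFTT
    have h_TFFFFF : P (S4.pat true false false false false false) = P (S4.pat true true true true true true) :=
      (S4.wall2 F P hP hinv 1 3 0 (by decide) (by decide) (by decide)
        (S4.pat true false false false false false) (S4.pat true false false false true false) (by decide) (by decide)).trans h_TFFFTF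
    have h_TTTFFF : P (S4.pat true true true false false false) = P (S4.pat true true true true true true) :=
      (S4.wall2 F P hP hinv 1 3 2 (by decide) (by decide) (by decide)
        (S4.pat true true true false false false) (S4.pat true true true false true false) (by decide) (by decide)).trans h_TTTFTF
    have h_FTFFFF : P (S4.pat false true false false false false) = P (S4.pat true true true true true true) :=
      (S4.wall2 F P hP hinv 1 3 2 (by decide) (by decide) (by decide)
        (S4.pat false true false false false false) (S4.pat false true false false true false) (by decide) (by decide)).trans h_FTFFTF
    have h_FFFFFF : P (S4.pat false false false false false false) = P (S4.pat true true true true true true) :=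
      (S4.wall2 F P hP hinv 0 3 1 (by decide) (by decide) (by decide)
        (S4.pat false false false false false false) (S4.pat false false true false false false) (by decide) (by decide)).trans h_FFTFFF
    intro b1 b2 b3 b4 b5 b6
    cases b1 <;> cases b2 <;> cases b3 <;> cases b4 <;> cases b5 <;> cases b6 <;>
      first | exact h_TTTTTT | exact h_TFTTTT | exact h_TTFTTT | exact h_TTTTFT | exact h_FFTTTT | exact h_TFFTTT | exact h_TFTFTT | exact h_TFTTFT | exact h_TFTTTF | exact h_FTFTTT | exact h_TTFTFT | exact h_TTFTTF | exact h_FTTTFT | exact h_TTTFFT | exact h_TTTTFF | exact h_FFTTFT | exact h_FFTTTF | exact h_FFFTTT | exact h_TFFFTT | exact h_TFFTFT | exact h_TFTFTF | exact h_TFTFFT | exact h_TFTTFF | exact h_TTTTTF | exact h_TFFTTF | exact h_FTTTTT | exact h_FTFFTT | exact h_FTFTFT | exact h_FTFTTF | exact h_TTFFFT | exact h_TTFTFF | exact h_TTFFTF | exact h_FTTFFT | exact h_FTTTFF | exact h_FFFTFT | exact h_FFTFFT | exact h_FFTTFF | exact h_FTTTTF | exact h_FFFTTF | exact h_FFTFTF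 | exact h_FFFFTT | exact h_TTFFTT | exact h_TFFFFT | exact h_TFFFTF | exact h_TFFTFF | exact h_TTTFTF | exact h_TFTFFF | exact h_FTTFTT | exact h_FTFFTF | exact h_FTFFFT | exact h_FTFTFF | exact h_TTFFFF | exact h_FTTFFF | exact h_FFFFFT | exact h_FFFTFF | exact h_FFTFTT | exact h_FFTFFF | exact h_FTTFTF | exact h_FFFFTF | exact h_TTTFTT | exact h_TFFFFF | exact h_TTTFFF | exact h_FTFFFF | exact h_FFFFFF
  exact (S4.norm_pat F P hP ε₁).trans
    (((big _ _ _ _ _ _).trans (big _ _ _ _ _ _).symm).trans (S4.norm_pat F P hP ε₂).symm)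
end

section
/- Let F : ℝ³ × ℝ³ → ℝ be a function such that: (i) F(Y₁, V) = F(Y₂, V) whenever Y₁·V = Y₂·V, and (ii) F(Y, V₁) = F(Y, V₂) whenever Y·V₁ = Y·V₂, where (x,y,z)·(u,v,w) = xw + yv + zu. Then there exists a function f : ℝ → ℝ such that F(Y, V) = f(Y·V) for all Y, V ∈ ℝ³. -/
/-- The bilinear pairing `(x,y,z) · (u,v,w) = xw + yv + zu` on `ℝ³ × ℝ³`. -/
def pairing (Y V : Fin 3 → ℝ) : ℝ := Y 0 * V 2 + Y 1 * V 1 + Y 2 * V 0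

/-- If `F : ℝ³ × ℝ³ → ℝ` depends on `Y` only through `Y · V` (for each fixed `V`) and
on `V` only through `Y · V` (for each fixed `Y`), then `F` is a function of `Y · V`. -/
theorem statement6 (F : (Fin 3 → ℝ) → (Fin 3 → ℝ) → ℝ)
    (h1 : ∀ Y₁ Y₂ V : Fin 3 → ℝ, pairing Y₁ V = pairing Y₂ V → F Y₁ V = F Y₂ V)
    (h2 : ∀ Y V₁ V₂ : Fin 3 → ℝ, pairing Y V₁ = pairing Y V₂ → F Y V₁ = F Y V₂) :
    ∃ f : ℝ → ℝ, ∀ Y V : Fin 3 → ℝ, F Y V = f (pairing Y V) := by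
  refine ⟨fun t => F ![t, 0, 0] ![0, 0, 1], fun Y V => ?_⟩
  set t : ℝ := pairing Y V with ht
  show F Y V = F ![t, 0, 0] ![0, 0, 1]
  -- key lemma: if Z 1 ≠ 0 and pairing Z W = t, then F Z W = F ![t,0,0] ![0,0,1]
  have key : ∀ Z W : Fin 3 → ℝ, Z 1 ≠ 0 → pairing Z W = t →
      F Z W = F ![t, 0, 0] ![0, 0, 1] := by
    intro Z W hz hp
    calc F Z W = F Z ![0, (t - Z 0) / Z 1, 1] := by
          apply h2
          rw [hp]
          simp [pairing]
          field_simp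
          ring
      _ = F ![t, 0, 0] ![0, (t - Z 0) / Z 1, 1] := by
          apply h1
          simp [pairing]
          field_simp
          ring
      _ = F ![t, 0, 0] ![0, 0, 1] := by
          apply h2
          simp [pairing]
  by_cases hY1 : Y 1 ≠ 0
  · exact key Y V hY1 rfl
  push_neg at hY1
  by_cases hY2 : Y 2 ≠ 0
  · -- analogous argument with W = ![(t - Y 0)/Y 2, 0, 1]
    calc F Y V = F Y ![(t - Y 0) / Y 2, 0, 1] := by
          apply h2
          show t = _
          simp [pairing]
          field_simp
          ring
      _ = F ![t, 0, 0] ![(t - Y 0) / Y 2, 0, 1] := by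
          apply h1
          simp [pairing, hY1]
          field_simp
          ring
      _ = F ![t, 0, 0] ![0, 0, 1] := by
          apply h2
          simp [pairing]
  push_neg at hY2
  -- Y 1 = Y 2 = 0, so t = Y 0 * V 2
  have ht' : t = Y 0 * V 2 := by simp [ht, pairing, hY1, hY2]
  calc F Y V = F Y ![0, 0, V 2] := by
        apply h2
        simp [pairing, hY1, hY2]
    _ = F ![Y 0, 1, 0] ![0, 0, V 2] := by
        apply h1
        simp [pairing, hY1, hY2]
    _ = F ![t, 0, 0] ![0, 0, 1] := by
        apply key
        · norm_num
        · simp [pairing, ht']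
end

section
/- Parametrize 3-quivers by (x,y,z) ∈ ℝ³ via the skew-symmetric matrix X with first row (0, x, −y), second row (−x, 0, z), third row (y, −z, 0). Define F : ℝ³ → ℝ by F(x,y,z) = x² + y² + z² − xyz if at least two of x, y, z are nonnegative, and F(x,y,z) = x² + y² + z² + xyz if at least two of x, y, z are nonpositive. Then F is well defined and is invariant under the cluster mutations μ_1, μ_2, μ_3 of 3-quivers: F is unchanged when (x,y,z) is replaced by the parameters of μ_k(X) for each k ∈ {1,2,3}. -/
open Matrix

/-- The 3-quiver with parameters `(x, y, z)`. -/
def quiv3 (x y z : ℝ) : Matrix (Fin 3) (Fin 3) ℝ :=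
  !![0, x, -y; -x, 0, z; y, -z, 0]

/-- At least two of `x`, `y`, `z` are nonnegative. -/
def TwoNonneg (x y z : ℝ) : Prop :=
  (0 ≤ x ∧ 0 ≤ y) ∨ (0 ≤ x ∧ 0 ≤ z) ∨ (0 ≤ y ∧ 0 ≤ z)

/-- At least two of `x`, `y`, `z` are nonpositive. -/
def TwoNonpos (x y z : ℝ) : Prop :=
  (x ≤ 0 ∧ y ≤ 0) ∨ (x ≤ 0 ∧ z ≤ 0) ∨ (y ≤ 0 ∧ z ≤ 0)

open Classical in
noncomputable def myF (x y z : ℝ) : ℝ :=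
  if TwoNonneg x y z then x ^ 2 + y ^ 2 + z ^ 2 - x * y * z
  else x ^ 2 + y ^ 2 + z ^ 2 + x * y * z

lemma myF_nonneg {x y z : ℝ} (h : TwoNonneg x y z) :
    myF x y z = x ^ 2 + y ^ 2 + z ^ 2 - x * y * z := by simp [myF, h]

lemma myF_nonpos {x y z : ℝ} (h : TwoNonpos x y z) :
    myF x y z = x ^ 2 + y ^ 2 + z ^ 2 + x * y * z := by
  unfold myF
  split_ifs with h1
  · have hz : x * y * z = 0 := by
      rcases h1 with ⟨a, b⟩ | ⟨a, b⟩ | ⟨a, b⟩ <;> rcases h with ⟨c, d⟩ | ⟨c, d⟩ | ⟨c, d⟩ <;>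
        first
        | (have hx0 : x = 0 := le_antisymm (by assumption) (by assumption); rw [hx0]; ring)
        | (have hy0 : y = 0 := le_antisymm (by assumption) (by assumption); rw [hy0]; ring)
        | (have hz0 : z = 0 := le_antisymm (by assumption) (by assumption); rw [hz0]; ring)
    rw [hz]; ring_nf
  · rfl

lemma myF_swap23 (a b c : ℝ) : myF a b c = myF a c b := by
  unfold myF
  split_ifs <;> first | ring1 | (exfalso; unfold TwoNonneg at *; tauto)

lemma myF_rot (a b c : ℝ) : myF a b c = myF b c a := by
  unfold myF
  split_ifs <;> first | ring1 | (exfalso; unfold TwoNonneg at *; tauto)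

lemma keyPP {x y : ℝ} (z : ℝ) (hx : 0 < x) (hy : 0 < y) :
    myF (-x) (-y) (z - x * y) = myF x y z := by
  have hTn : TwoNonneg x y z := Or.inl ⟨hx.le, hy.le⟩
  have hTn' : ¬ TwoNonneg (-x) (-y) (z - x * y) := by
    rintro (⟨a, b⟩ | ⟨a, b⟩ | ⟨a, b⟩) <;> nlinarith
  simp [myF, hTn, hTn']; try ring1

lemma keyNN {x y : ℝ} (z : ℝ) (hx : x < 0) (hy : y < 0) :
    myF (-x) (-y) (z + x * y) = myF x y z := by
  have hTn' : TwoNonneg (-x) (-y) (z + x * y) := Or.inl ⟨by linarith, by linarith⟩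
  have hTn : ¬ TwoNonneg x y z := by
    rintro (⟨a, b⟩ | ⟨a, b⟩ | ⟨a, b⟩) <;> nlinarith
  simp [myF, hTn, hTn']; try ring1

lemma keyMix {x y : ℝ} (z : ℝ) (h1 : ¬(x < 0 ∧ y < 0)) (h2 : ¬(0 < x ∧ 0 < y)) :
    myF (-x) (-y) z = myF x y z := by
  rcases lt_trichotomy x 0 with hx | hx | hx
  · rcases lt_trichotomy y 0 with hy | hy | hy
    · exact absurd ⟨hx, hy⟩ h1
    · rw [hy]; unfold myF; split_ifs <;> ring
    · rcases le_or_gt 0 z with hz | hz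
      · have hTn : TwoNonneg x y z := Or.inr (Or.inr ⟨hy.le, hz⟩)
        have hTn' : TwoNonneg (-x) (-y) z := Or.inr (Or.inl ⟨by linarith, hz⟩)
        simp [myF, hTn, hTn']; try ring1
      · have hTn : ¬ TwoNonneg x y z := by
          rintro (⟨a, b⟩ | ⟨a, b⟩ | ⟨a, b⟩) <;> linarith
        have hTn' : ¬ TwoNonneg (-x) (-y) z := by
          rintro (⟨a, b⟩ | ⟨a, b⟩ | ⟨a, b⟩) <;> linarith
        simp [myF, hTn, hTn']; try ring1
  · rw [hx]; unfold myF; split_ifs <;> ring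
  · rcases lt_trichotomy y 0 with hy | hy | hy
    · rcases le_or_gt 0 z with hz | hz
      · have hTn : TwoNonneg x y z := Or.inr (Or.inl ⟨hx.le, hz⟩)
        have hTn' : TwoNonneg (-x) (-y) z := Or.inr (Or.inr ⟨by linarith, hz⟩)
        simp [myF, hTn, hTn']; try ring1
      · have hTn : ¬ TwoNonneg x y z := by
          rintro (⟨a, b⟩ | ⟨a, b⟩ | ⟨a, b⟩) <;> linarith
        have hTn' : ¬ TwoNonneg (-x) (-y) z := by
          rintro (⟨a, b⟩ | ⟨a, b⟩ | ⟨a, b⟩) <;> linarith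
        simp [myF, hTn, hTn']; try ring1
    · rw [hy]; unfold myF; split_ifs <;> ring
    · exact absurd ⟨hx, hy⟩ h2

/-- There is a well-defined function `F` on 3-quivers equal to `x² + y² + z² − xyz`
when at least two of `x, y, z` are nonnegative and to `x² + y² + z² + xyz` when at
least two are nonpositive, and `F` is invariant under the cluster mutations
`μ₁, μ₂, μ₃` of 3-quivers. -/
theorem statement11 :
    ∃ F : ℝ → ℝ → ℝ → ℝ,
      (∀ x y z : ℝ, TwoNonneg x y z → F x y z = x ^ 2 + y ^ 2 + z ^ 2 - x * y * z) ∧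
      (∀ x y z : ℝ, TwoNonpos x y z → F x y z = x ^ 2 + y ^ 2 + z ^ 2 + x * y * z) ∧
      (∀ (k : Fin 3) (x y z : ℝ),
        F (mutate k (quiv3 x y z) 0 1) (-(mutate k (quiv3 x y z) 0 2))
            (mutate k (quiv3 x y z) 1 2) = F x y z) := by
  refine ⟨myF, fun x y z h => myF_nonneg h, fun x y z h => myF_nonpos h, ?_⟩
  intro k x y z
  fin_cases k <;> simp [mutate, quiv3]
  · -- k = 0
    split_ifs with h1 h2
    · exact keyNN z h1.1 h1.2
    · exact keyPP z h2.1 h2.2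
    · exact keyMix z h1 h2
  · -- k = 1
    split_ifs with h1 h2
    · rw [show -(-y + x * z) = y - x * z by ring, myF_swap23, keyPP y h1.1 h1.2]
      exact myF_swap23 x z y
    · rw [show -(-y - x * z) = y + x * z by ring, myF_swap23, keyNN y h2.1 h2.2]
      exact myF_swap23 x z y
    · rw [neg_neg, myF_swap23, keyMix y h2 h1]
      exact myF_swap23 x z y
  · -- k = 2
    split_ifs with h1 h2
    · rw [myF_rot, keyNN x h1.1 h1.2]
      exact (myF_rot x y z).symm
    · rw [myF_rot, keyPP x h2.1 h2.2]
      exact (myF_rot x y z).symm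
    · rw [myF_rot, keyMix x h1 h2]
      exact (myF_rot x y z).symm
end
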